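/- Let (X, μ) be a measure space, let L be a finite index type, let (Y ℓ)_{ℓ∈L} be an orthonormal family in L²(μ; ℂ), and let v : X → ℝ be measurable with α ≤ v x ≤ β almost everywhere, for reals α ≤ β. Define E : Matrix L L ℂ by E j ℓ = ∫ conj(Y j x) · (Y ℓ x) · v x ∂μ(x). Then for every λ ∈ ℂ and every nonzero q : L → ℂ with E.mulVec q = λ • q, the eigenvalue λ is real and satisfies α ≤ λ ≤ β. -/

import Mathlib

open MeasureTheory ComplexConjugate Matrix

/-- Theorem 3.3 (non-strict form): for an orthonormal family `(Y ℓ)` in `L²(μ; ℂ)` and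
a measurable mask `v` with `α ≤ v ≤ β` a.e., every eigenvalue `λ` of the matrix
`E j ℓ = ∫ conj(Y j x) * Y ℓ x * v x dμ` is real and satisfies `α ≤ λ ≤ β`. -/
theorem stmt_5 {X : Type*} [MeasurableSpace X] {μ : Measure X}
    {L : Type*} [Fintype L]
    (Y : L → Lp ℂ 2 μ) (hY : Orthonormal ℂ Y)
    (v : X → ℝ) (hv : Measurable v) (α β : ℝ) (hαβ : α ≤ β)
    (hbound : ∀ᵐ x ∂μ, α ≤ v x ∧ v x ≤ β)
    (E : Matrix L L ℂ)
    (hE : ∀ j ℓ, E j ℓ = ∫ x, conj (Y j x) * (Y ℓ x) * (v x : ℂ) ∂μ)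
    (lam : ℂ) (q : L → ℂ) (hq : q ≠ 0)
    (heig : E.mulVec q = lam • q) :
    ∃ r : ℝ, lam = (r : ℂ) ∧ α ≤ r ∧ r ≤ β := by
  classical
  have hcm : ∀ z : ℂ, conj z * z = ((‖z‖ ^ 2 : ℝ) : ℂ) := fun z => by
    rw [mul_comm, Complex.mul_conj']; push_cast; ring
  -- bound on v
  set C : ℝ := max |α| |β| with hC
  have hvb : ∀ᵐ x ∂μ, ‖(v x : ℂ)‖ ≤ C := by
    filter_upwards [hbound] with x hx
    rw [Complex.norm_real, Real.norm_eq_abs, abs_le]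
    exact ⟨le_trans (neg_le_neg (le_max_left _ _)) ((neg_abs_le α).trans hx.1),
      hx.2.trans ((le_abs_self β).trans (le_max_right _ _))⟩
  -- integrability of pairwise products
  have hI0 : ∀ j ℓ : L, Integrable (fun x => conj (Y j x) * Y ℓ x) μ := fun j ℓ => by
    simpa [RCLike.inner_apply, mul_comm] using L2.integrable_inner (𝕜 := ℂ) (Y j) (Y ℓ)
  have hI : ∀ j ℓ : L, Integrable (fun x => conj (Y j x) * Y ℓ x * (v x : ℂ)) μ := by
    intro j ℓ
    have := Integrable.bdd_mul (c := C) (hI0 j ℓ)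
      ((Complex.measurable_ofReal.comp hv).aestronglyMeasurable) hvb
    exact this.congr (ae_of_all μ fun x => mul_comm _ _)
  -- the combined function g
  set g : X → ℂ := fun x => ∑ ℓ, q ℓ * Y ℓ x with hgdef
  have hg2 : MemLp g 2 μ :=
    memLp_finset_sum _ (fun ℓ _ => (Lp.memLp (Y ℓ)).const_mul (q ℓ))
  have hgc2 : MemLp (fun x => conj (g x)) 2 μ :=
    ⟨Complex.continuous_conj.comp_aestronglyMeasurable hg2.1, by
      have he : eLpNorm (fun x => conj (g x)) 2 μ = eLpNorm g 2 μ := by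
        rw [← eLpNorm_norm, ← eLpNorm_norm g]; simp
      rw [he]; exact hg2.2⟩
  have hgg : Integrable (fun x => conj (g x) * g x) μ := by
    rw [← memLp_one_iff_integrable]
    have := MemLp.smul (p := 2) (q := 2) (r := 1) hg2 hgc2
    simpa [smul_eq_mul, Pi.mul_def] using this
  have hggv : Integrable (fun x => conj (g x) * g x * (v x : ℂ)) μ := by
    have := Integrable.bdd_mul (c := C) hgg
      ((Complex.measurable_ofReal.comp hv).aestronglyMeasurable) hvb
    exact this.congr (ae_of_all μ fun x => mul_comm _ _)
  -- expansion key lemma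
  have key : ∀ (w : X → ℂ), (∀ j ℓ : L, Integrable (fun x => conj (Y j x) * Y ℓ x * w x) μ) →
      ∫ x, conj (g x) * g x * w x ∂μ
        = ∑ j, ∑ ℓ, conj (q j) * q ℓ * ∫ x, conj (Y j x) * Y ℓ x * w x ∂μ := by
    intro w hw
    have hexp : ∀ x, conj (g x) * g x * w x
        = ∑ j, ∑ ℓ, conj (q j) * q ℓ * (conj (Y j x) * Y ℓ x * w x) := by
      intro x
      have h1 : conj (g x) = ∑ j, conj (q j) * conj (Y j x) := by
        simp [hgdef, map_sum]
      rw [h1, hgdef]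
      rw [Finset.sum_mul_sum, Finset.sum_mul]
      refine Finset.sum_congr rfl fun j _ => ?_
      rw [Finset.sum_mul]
      exact Finset.sum_congr rfl fun ℓ _ => by ring
    calc ∫ x, conj (g x) * g x * w x ∂μ
        = ∫ x, ∑ j, ∑ ℓ, conj (q j) * q ℓ * (conj (Y j x) * Y ℓ x * w x) ∂μ := by
          simp_rw [hexp]
      _ = ∑ j, ∑ ℓ, conj (q j) * q ℓ * ∫ x, conj (Y j x) * Y ℓ x * w x ∂μ := by
          rw [integral_finset_sum _
            (fun j _ => integrable_finset_sum _ (fun ℓ _ => (hw j ℓ).const_mul _))]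
          refine Finset.sum_congr rfl fun j _ => ?_
          rw [integral_finset_sum _ (fun ℓ _ => (hw j ℓ).const_mul _)]
          exact Finset.sum_congr rfl fun ℓ _ => integral_const_mul _ _
  -- Parseval
  set N : ℝ := ∑ j, ‖q j‖ ^ 2 with hNdef
  have hinner : ∀ j ℓ : L, (∫ x, conj (Y j x) * Y ℓ x ∂μ) = if j = ℓ then 1 else 0 := by
    intro j ℓ
    have := orthonormal_iff_ite.mp hY j ℓ
    rw [L2.inner_def] at this
    simpa [RCLike.inner_apply, mul_comm] using this
  have hPar : ∫ x, conj (g x) * g x ∂μ = (N : ℂ) := by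
    have h1 := key (fun _ => 1) (fun j ℓ => by simpa using hI0 j ℓ)
    simp only [mul_one] at h1
    rw [h1]
    rw [show (N : ℂ) = ∑ j, ((‖q j‖ ^ 2 : ℝ) : ℂ) by push_cast [hNdef]; ring]
    refine Finset.sum_congr rfl fun j _ => ?_
    rw [Finset.sum_eq_single j (fun ℓ _ hℓ => by rw [hinner j ℓ, if_neg (Ne.symm hℓ)]; ring)
      (fun h => absurd (Finset.mem_univ j) h)]
    rw [hinner j j, if_pos rfl, mul_one, hcm]
  have hN2 : ∫ x, ‖g x‖ ^ 2 ∂μ = N := by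
    have : ∫ x, conj (g x) * g x ∂μ = ((∫ x, ‖g x‖ ^ 2 ∂μ : ℝ) : ℂ) := by
      simp_rw [hcm]; exact integral_ofReal
    rw [this] at hPar
    exact_mod_cast hPar
  have hNpos : 0 < N := by
    obtain ⟨j, hj⟩ := Function.ne_iff.mp hq
    exact Finset.sum_pos' (fun i _ => sq_nonneg _)
      ⟨j, Finset.mem_univ j, pow_pos (norm_pos_iff.mpr hj) 2⟩
  -- quadratic form value
  set R : ℝ := ∫ x, ‖g x‖ ^ 2 * v x ∂μ with hRdef
  have hQR : ∫ x, conj (g x) * g x * (v x : ℂ) ∂μ = (R : ℂ) := by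
    have : ∀ x, conj (g x) * g x * (v x : ℂ) = ((‖g x‖ ^ 2 * v x : ℝ) : ℂ) := fun x => by
      rw [hcm]; push_cast; ring
    simp_rw [this]; exact integral_ofReal
  -- eigen equation gives lam * N = R
  have hmain : lam * (N : ℂ) = (R : ℂ) := by
    have hS : ∑ j, conj (q j) * (E.mulVec q j) = (R : ℂ) := by
      have hexp : ∑ j, conj (q j) * (E.mulVec q j)
          = ∑ j, ∑ ℓ, conj (q j) * q ℓ * E j ℓ := by
        refine Finset.sum_congr rfl fun j _ => ?_
        rw [mulVec, dotProduct, Finset.mul_sum]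
        exact Finset.sum_congr rfl fun ℓ _ => by ring
      rw [hexp, ← hQR, key (fun x => (v x : ℂ)) hI]
      exact Finset.sum_congr rfl fun j _ => Finset.sum_congr rfl fun ℓ _ => by rw [hE]
    have hS' : ∑ j, conj (q j) * (E.mulVec q j) = lam * (N : ℂ) := by
      rw [heig]
      have : ∀ j : L, conj (q j) * ((lam • q) j) = lam * ((‖q j‖ ^ 2 : ℝ) : ℂ) := fun j => by
        rw [Pi.smul_apply, smul_eq_mul, ← hcm]; ring
      simp_rw [this, ← Finset.mul_sum]
      congr 1
      push_cast [hNdef]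
      ring
    rw [← hS', hS]
  -- integrability of real parts
  have hiN : Integrable (fun x => ‖g x‖ ^ 2) μ := by
    have := hgg.re
    refine this.congr (ae_of_all μ fun x => ?_)
    show RCLike.re ((starRingEnd ℂ) (g x) * g x) = ‖g x‖ ^ 2
    rw [hcm]
    simp only [RCLike.re_to_complex, Complex.ofReal_re]
  have hiR : Integrable (fun x => ‖g x‖ ^ 2 * v x) μ := by
    have := hggv.re
    refine this.congr (ae_of_all μ fun x => ?_)
    show RCLike.re ((starRingEnd ℂ) (g x) * g x * (v x : ℂ)) = ‖g x‖ ^ 2 * v x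
    rw [show (starRingEnd ℂ) (g x) * g x * (v x : ℂ) = ((‖g x‖ ^ 2 * v x : ℝ) : ℂ) from by
      rw [hcm]; push_cast; ring]
    simp only [RCLike.re_to_complex, Complex.ofReal_re]
  -- bounds on R
  have hRlow : α * N ≤ R := by
    rw [← hN2, ← integral_const_mul]
    refine integral_mono_ae (hiN.const_mul α) hiR ?_
    filter_upwards [hbound] with x hx
    calc α * ‖g x‖ ^ 2 ≤ v x * ‖g x‖ ^ 2 := by
          exact mul_le_mul_of_nonneg_right hx.1 (sq_nonneg _)
      _ = ‖g x‖ ^ 2 * v x := mul_comm _ _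
  have hRhigh : R ≤ β * N := by
    rw [← hN2, ← integral_const_mul]
    refine integral_mono_ae hiR (hiN.const_mul β) ?_
    filter_upwards [hbound] with x hx
    calc ‖g x‖ ^ 2 * v x = v x * ‖g x‖ ^ 2 := mul_comm _ _
      _ ≤ β * ‖g x‖ ^ 2 := mul_le_mul_of_nonneg_right hx.2 (sq_nonneg _)
  refine ⟨R / N, ?_, ?_, ?_⟩
  · have hNne : (N : ℂ) ≠ 0 := by exact_mod_cast hNpos.ne'
    rw [Complex.ofReal_div, eq_div_iff hNne]
    exact hmain
  · rw [le_div_iff₀ hNpos]; linarith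
  · rw [div_le_iff₀ hNpos]; linarith
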